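/- CVaR is an upper bound of VaR: the β-CVaR is at least the β-VaR, i.e. φ_β ≥ η_β. -/

import Mathlib

open MeasureTheory Set

/-- CVaR is an upper bound of VaR: `φ_β ≥ η_β`. -/
theorem cvar_ge_var
    {Ω : Type*} [MeasurableSpace Ω] (μ : Measure Ω) [IsProbabilityMeasure μ]
    (L : Ω → ℝ) (hL : Integrable L μ)
    (β : ℝ) (hβ : β ∈ Set.Ioo (0 : ℝ) 1)
    (ηβ : ℝ) (hηβ : ηβ = sInf {η : ℝ | β ≤ (μ {ω | L ω ≤ η}).toReal}) :
    ηβ ≤ ⨅ η : ℝ, (η + (1 - β)⁻¹ * ∫ ω, max (L ω - η) 0 ∂μ) := by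
  obtain ⟨hβ0, hβ1⟩ := hβ
  have h1β : 0 < 1 - β := by linarith
  set f := hL.aestronglyMeasurable.mk L with hfdef
  have hfm : Measurable f := hL.aestronglyMeasurable.stronglyMeasurable_mk.measurable
  have hfe : L =ᵐ[μ] f := hL.aestronglyMeasurable.ae_eq_mk
  have hmeas : ∀ η : ℝ, MeasurableSet {ω | f ω ≤ η} := fun η => hfm measurableSet_Iic
  have hμeq : ∀ η : ℝ, μ {ω | L ω ≤ η} = μ {ω | f ω ≤ η} := by
    intro η
    refine measure_congr ?_
    filter_upwards [hfe] with ω hω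
    exact congrArg (fun x => x ≤ η) hω
  set S : Set ℝ := {η : ℝ | β ≤ (μ {ω | L ω ≤ η}).toReal} with hS
  -- find η₀ with Ψ(η₀) < β
  have hIempty : (⋂ n : ℕ, {ω | f ω ≤ -(n : ℝ)}) = ∅ := by
    ext ω
    simp only [Set.mem_iInter, Set.mem_setOf_eq, Set.mem_empty_iff_false, iff_false, not_forall,
      not_le]
    obtain ⟨n, hn⟩ := exists_nat_gt (-(f ω))
    exact ⟨n, by linarith⟩
  have htend : Filter.Tendsto (fun n : ℕ => μ {ω | f ω ≤ -(n : ℝ)}) Filter.atTop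
      (nhds (μ (⋂ n : ℕ, {ω | f ω ≤ -(n : ℝ)}))) := by
    refine tendsto_measure_iInter_atTop (fun n => (hmeas _).nullMeasurableSet) ?_
      ⟨0, measure_ne_top μ _⟩
    intro m n hmn ω hω
    have : -(n : ℝ) ≤ -(m : ℝ) := by
      simp only [neg_le_neg_iff, Nat.cast_le]; exact hmn
    exact le_trans hω this
  rw [hIempty, measure_empty] at htend
  have hev : ∀ᶠ n : ℕ in Filter.atTop, μ {ω | f ω ≤ -(n : ℝ)} < ENNReal.ofReal β :=
    htend.eventually_lt_const (by simp [ENNReal.ofReal_pos, hβ0])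
  obtain ⟨n, hn⟩ := hev.exists
  have hη₀ : (μ {ω | f ω ≤ -(n : ℝ)}).toReal < β :=
    ENNReal.toReal_lt_of_lt_ofReal hn
  -- S is bounded below
  have hbdd : BddBelow S := by
    refine ⟨-(n : ℝ), fun s hs => ?_⟩
    by_contra hcon
    push_neg at hcon
    have hmono : (μ {ω | f ω ≤ s}).toReal ≤ (μ {ω | f ω ≤ -(n : ℝ)}).toReal := by
      refine ENNReal.toReal_mono (measure_ne_top μ _) (measure_mono fun ω hω => ?_)
      exact le_trans hω hcon.le
    have hβs : β ≤ (μ {ω | f ω ≤ s}).toReal := by rw [← hμeq]; exact hs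
    linarith
  -- main inequality
  refine le_ciInf fun η => ?_
  have hInn : 0 ≤ ∫ ω, max (L ω - η) 0 ∂μ :=
    integral_nonneg fun ω => le_max_right _ _
  have hcnn : 0 ≤ (1 - β)⁻¹ := by positivity
  have hηle : η ≤ η + (1 - β)⁻¹ * ∫ ω, max (L ω - η) 0 ∂μ := by
    nlinarith [mul_nonneg hcnn hInn]
  rcases le_or_gt ηβ η with h | h
  · linarith
  · by_contra hcon
    push_neg at hcon
    obtain ⟨t, ht1, ht2⟩ := exists_between hcon
    have hηt : η < t := lt_of_le_of_lt hηle ht1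
    have htS : t ∉ S := fun hmem => absurd (hηβ ▸ csInf_le hbdd hmem) (not_le.2 ht2)
    have hΨt : (μ {ω | f ω ≤ t}).toReal < β := by
      rw [← hμeq]
      exact lt_of_not_ge htS
    have hcompl : {ω | t < f ω} = {ω | f ω ≤ t}ᶜ := by
      ext ω; simp [not_le]
    have hμgt : (μ {ω | t < f ω}).toReal = 1 - (μ {ω | f ω ≤ t}).toReal := by
      rw [hcompl, measure_compl (hmeas t) (measure_ne_top μ _), measure_univ,
        ENNReal.toReal_sub_of_le prob_le_one ENNReal.one_ne_top, ENNReal.toReal_one]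
    have hgt : 1 - β < (μ {ω | t < f ω}).toReal := by linarith
    have hindint : Integrable ({ω | t < f ω}.indicator fun _ => t - η) μ :=
      (integrable_const (t - η)).indicator (hcompl ▸ (hmeas t).compl)
    have hmaxint : Integrable (fun ω => max (L ω - η) 0) μ :=
      (hL.sub (integrable_const η)).pos_part
    have hmono_ae : ({ω | t < f ω}.indicator fun _ => t - η) ≤ᵐ[μ]
        fun ω => max (L ω - η) 0 := by
      filter_upwards [hfe] with ω hω
      by_cases hmem : ω ∈ {ω | t < f ω}
      · rw [Set.indicator_of_mem hmem]
        have : t < f ω := hmem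
        have : t - η ≤ L ω - η := by rw [hω]; linarith
        exact le_trans this (le_max_left _ _)
      · rw [Set.indicator_of_notMem hmem]
        exact le_max_right _ _
    have hI2 : (t - η) * (μ {ω | t < f ω}).toReal ≤ ∫ ω, max (L ω - η) 0 ∂μ := by
      calc (t - η) * (μ {ω | t < f ω}).toReal
          = ∫ ω, ({ω | t < f ω}.indicator fun _ => t - η) ω ∂μ := by
            rw [integral_indicator_const _ (hcompl ▸ (hmeas t).compl)]
            rw [smul_eq_mul, mul_comm]
            rfl
        _ ≤ ∫ ω, max (L ω - η) 0 ∂μ := integral_mono_ae hindint hmaxint hmono_ae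
    have hinv : (1 - β)⁻¹ * (1 - β) = 1 := inv_mul_cancel₀ (ne_of_gt h1β)
    have hfinal : t < η + (1 - β)⁻¹ * ∫ ω, max (L ω - η) 0 ∂μ := by
      have h3 : (t - η) * (1 - β) < (t - η) * (μ {ω | t < f ω}).toReal :=
        mul_lt_mul_of_pos_left hgt (by linarith)
      have h4 : (t - η) * (1 - β) < ∫ ω, max (L ω - η) 0 ∂μ := lt_of_lt_of_le h3 hI2
      have h5 : (1 - β)⁻¹ * ((t - η) * (1 - β)) < (1 - β)⁻¹ * ∫ ω, max (L ω - η) 0 ∂μ :=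
        mul_lt_mul_of_pos_left h4 (by positivity)
      have h6 : (1 - β)⁻¹ * ((t - η) * (1 - β)) = t - η := by
        field_simp
      linarith
    linarith
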